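/- For n ≥ 3, nst(n) := Σ_{λ ∈ S_n} nst(λ,λ) = Σ_{j=1}^{n−3} Σ_{k=j+1}^{n−2} j(k−j) · b[n,k,j], where b[n,k,j] counts set partitions of {1,...,n} containing arcs (j,n) and (k,n−1) when j<k<n−1, and those containing (j,n) and no arc into n−1 when k=n−1. -/

import Mathlib

open scoped Classical
open Finset

noncomputable section

/-- A set partition of `{1,…,n}` encoded as a set of arcs `(i,j)` with `1 ≤ i < j ≤ n`,
no two distinct arcs sharing a left endpoint or a right endpoint. -/
def IsSP (n : ℕ) (lam : Finset (ℕ × ℕ)) : Prop :=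
  (∀ a ∈ lam, 1 ≤ a.1 ∧ a.1 < a.2 ∧ a.2 ≤ n) ∧
  (∀ a ∈ lam, ∀ b ∈ lam, a ≠ b → a.1 ≠ b.1 ∧ a.2 ≠ b.2)

/-- `nstF A B = #{(i,j,k,l) : i<j<k<l, (i,l) ∈ B, (j,k) ∈ A}`. -/
def nstF (A B : Finset (ℕ × ℕ)) : ℕ :=
  ((B ×ˢ A).filter fun p => p.1.1 < p.2.1 ∧ p.2.1 < p.2.2 ∧ p.2.2 < p.1.2).card

/-- `dimF λ = Σ_{(i,l)∈λ} (l-i)`. -/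
def dimF (lam : Finset (ℕ × ℕ)) : ℕ := ∑ a ∈ lam, (a.2 - a.1)

/-- Supercharacter value `χ^λ_μ`. -/
def chiF {K : Type*} [Field K] (q : K) (lam mu : Finset (ℕ × ℕ)) : K :=
  if ∀ i j k : ℕ, i < j → j < k → (i, k) ∈ lam → (i, j) ∉ mu ∧ (j, k) ∉ mu then
    (q - 1) ^ (lam.card - (lam ∩ mu).card) * q ^ (dimF lam - lam.card) *
      (-1 : K) ^ ((lam ∩ mu).card) * (q ^ nstF mu lam)⁻¹
  else 0

/-- `(j,k)` conflicts with `λ`: some arc of `λ` shares an endpoint with it and strictly contains it. -/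
def cfltP (lam : Finset (ℕ × ℕ)) (a : ℕ × ℕ) : Prop :=
  ∃ b ∈ lam, (b.1 = a.1 ∧ a.1 < a.2 ∧ a.2 < b.2) ∨ (b.1 < a.1 ∧ a.1 < a.2 ∧ a.2 = b.2)

/-- Strictly nested pairs: inner arc of `ν` not conflicting with `λ`, nested in an arc of `λ`. -/
def snstF (nu lam : Finset (ℕ × ℕ)) : ℕ :=
  ((lam ×ˢ nu).filter fun p =>
    p.1.1 < p.2.1 ∧ p.2.1 < p.2.2 ∧ p.2.2 < p.1.2 ∧ ¬ cfltP lam p.2).card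

/-- Multiset of arc lengths, sorted decreasingly. -/
def dimv (lam : Finset (ℕ × ℕ)) : List ℕ :=
  ((lam.val.map fun a => a.2 - a.1).sort (· ≤ ·)).reverse

/-- All set partitions of `{1,…,n}` as arc sets. -/
def allSP (n : ℕ) : Finset (Finset (ℕ × ℕ)) :=
  ((Finset.Icc 1 n ×ˢ Finset.Icc 1 n).powerset).filter (IsSP n)

/-- The three-index array `b[n,k,j]` counting set partitions with prescribed arcs into
`n` and `n-1`. -/
def b3 (n k j : ℕ) : ℕ :=
  if k = n - 1 then
    ((allSP n).filter fun l =>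
      (j, n) ∈ l ∧ ∀ i, 1 ≤ i → i < n - 1 → (i, n - 1) ∉ l).card
  else ((allSP n).filter fun l => (j, n) ∈ l ∧ (k, n - 1) ∈ l).card

def Phi : List ℤ → ℤ
  | [] => 1
  | o :: os => Phi (os.map (· + 1)) + (o + 1) * Phi os
termination_by l => l.length
decreasing_by all_goals simp

theorem Phi_nil : Phi [] = 1 := by rw [Phi]
theorem Phi_cons (o : ℤ) (os : List ℤ) :
    Phi (o :: os) = Phi (os.map (· + 1)) + (o + 1) * Phi os := by
  rw [Phi]

theorem map_add_add (l : List ℤ) (c d : ℤ) :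
    (l.map (· + c)).map (· + d) = l.map (· + (c + d)) := by
  rw [List.map_map]; congr 1; funext t; simp; ring

theorem Phi_perm_shift {l₁ l₂ : List ℤ} (h : l₁.Perm l₂) :
    ∀ c : ℤ, Phi (l₁.map (· + c)) = Phi (l₂.map (· + c)) := by
  induction h with
  | nil => intro c; rfl
  | cons x h ih =>
      intro c
      simp only [List.map_cons, Phi_cons, map_add_add]
      rw [ih (c+1), ih c]
  | swap x y l =>
      intro c
      simp only [List.map_cons, Phi_cons, List.map_cons, map_add_add]
      ring
  | trans _ _ ih1 ih2 => intro c; rw [ih1 c, ih2 c]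

theorem Phi_perm {l₁ l₂ : List ℤ} (h : l₁.Perm l₂) : Phi l₁ = Phi l₂ := by
  have h0 := Phi_perm_shift h 0
  simpa using h0

def off : List ℤ → List ℤ
  | [] => []
  | d :: ds => (d - 1) :: (off ds).map (· - 1)

theorem off_map_sub (L : List ℤ) : off (L.map (· - 1)) = (off L).map (· - 1) := by
  induction L with
  | nil => rfl
  | cons d ds ih =>
      simp only [List.map_cons, off, ih, List.map_map]

theorem map_sub_add (M : List ℤ) : (M.map (· - 1)).map (· + 1) = M := by
  induction M with
  | nil => rfl
  | cons d ds ih => simp only [List.map_cons, ih]; norm_num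

theorem Phi_off_cons (d : ℤ) (L : List ℤ) :
    Phi (off (d :: L)) = Phi (off L) + d * Phi (off (L.map (· - 1))) := by
  rw [off, Phi_cons, off_map_sub, map_sub_add]
  ring


def zseg (s : ℤ) : ℕ → List ℤ
  | 0 => []
  | m + 1 => s :: zseg (s + 1) m

theorem off_zseg (s : ℤ) (m : ℕ) : off (zseg s m) = List.replicate m (s - 1) := by
  induction m generalizing s with
  | zero => rfl
  | succ m ih =>
      rw [zseg, off, ih, List.map_replicate, List.replicate_succ]
      congr 2
      ring

theorem off_append (L1 L2 : List ℤ) :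
    off (L1 ++ L2) = off L1 ++ (off L2).map (· - (L1.length : ℤ)) := by
  induction L1 with
  | nil => simp [off]
  | cons d ds ih =>
      rw [List.cons_append,
        show off (d :: (ds ++ L2)) = (d - 1) :: (off (ds ++ L2)).map (· - 1) from rfl,
        ih, List.map_append, List.map_map,
        show off (d :: ds) = (d - 1) :: (off ds).map (· - 1) from rfl,
        List.cons_append]
      congr 1
      congr 1
      apply List.map_congr_left
      intro t _
      simp only [Function.comp_apply, List.length_cons]
      push_cast
      ring

theorem map_range'_affine : ∀ (m s : ℕ) (c : ℤ) (f : ℕ → ℤ),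
    (∀ t, t < m → f (s + t) = c + t) → (List.range' s m).map f = zseg c m := by
  intro m
  induction m with
  | zero => intro s c f _; rfl
  | succ m ih =>
      intro s c f h
      rw [List.range'_succ, List.map_cons, zseg]
      congr 1
      · have := h 0 (by omega)
        simpa using this
      · apply ih
        intro t ht
        have := h (t + 1) (by omega)
        rw [show s + 1 + t = s + (t + 1) by ring, this]
        push_cast
        ring

theorem card_Icc_sdiff_pair (i a m : ℕ) (h1 : 1 ≤ i) (h2 : i < a) :
    (Finset.Icc 1 m \ ({i, a} : Finset ℕ)).card
      = m - (if i ≤ m then 1 else 0) - (if a ≤ m then 1 else 0) := by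
  have hcard : (Finset.Icc 1 m).card = m := by rw [Nat.card_Icc]; omega
  have key : (Finset.Icc 1 m \ ({i, a} : Finset ℕ)).card
      = (Finset.Icc 1 m).card - (Finset.Icc 1 m ∩ ({i, a} : Finset ℕ)).card := by
    have := Finset.card_sdiff_add_card_inter (Finset.Icc 1 m) ({i, a} : Finset ℕ)
    omega
  rw [key, hcard]
  by_cases hi : i ≤ m <;> by_cases ha : a ≤ m
  · have he : Finset.Icc 1 m ∩ ({i, a} : Finset ℕ) = {i, a} := by
      ext x; simp; omega
    rw [he, if_pos hi, if_pos ha,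
      Finset.card_insert_of_notMem (by simp; omega), Finset.card_singleton]
    omega
  · have he : Finset.Icc 1 m ∩ ({i, a} : Finset ℕ) = {i} := by
      ext x; simp; omega
    rw [he, if_pos hi, if_neg ha, Finset.card_singleton]
    omega
  · omega
  · have he : Finset.Icc 1 m ∩ ({i, a} : Finset ℕ) = ∅ := by
      ext x; simp; omega
    rw [he, if_neg hi, if_neg ha, Finset.card_empty]
    omega

theorem pairwise_lt_app {l1 l2 : List ℕ} (h1 : l1.Pairwise (· < ·)) (h2 : l2.Pairwise (· < ·))
    (h : ∀ x ∈ l1, ∀ y ∈ l2, x < y) : (l1 ++ l2).Pairwise (· < ·) :=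
  List.pairwise_append.mpr ⟨h1, h2, h⟩


def Mset (rs : List ℕ) (C : ℕ → Finset ℕ) : Finset (Finset (ℕ × ℕ)) :=
  ((rs.toFinset.biUnion fun y => (C y).image fun x => (x, y)).powerset).filter
    fun m => ∀ p ∈ m, ∀ q ∈ m, p ≠ q → p.1 ≠ q.1 ∧ p.2 ≠ q.2

theorem mem_Mset {rs : List ℕ} {C : ℕ → Finset ℕ} {m : Finset (ℕ × ℕ)} :
    m ∈ Mset rs C ↔ (∀ p ∈ m, p.2 ∈ rs ∧ p.1 ∈ C p.2) ∧
      (∀ p ∈ m, ∀ q ∈ m, p ≠ q → p.1 ≠ q.1 ∧ p.2 ≠ q.2) := by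
  simp only [Mset, mem_filter, mem_powerset, and_congr_left_iff]
  intro _
  constructor
  · intro h p hp
    have := h hp
    simp only [mem_biUnion, List.mem_toFinset, mem_image] at this
    obtain ⟨y, hy, x, hx, hxy⟩ := this
    have h2 : p.2 = y := by rw [← hxy]
    have h1 : p.1 = x := by rw [← hxy]
    exact ⟨h2 ▸ hy, by rw [h1, h2]; exact hx⟩
  · intro h p hp
    simp only [mem_biUnion, List.mem_toFinset, mem_image]
    exact ⟨p.2, (h p hp).1, p.1, (h p hp).2, rfl⟩

theorem Mset_card : ∀ (rs : List ℕ) (C : ℕ → Finset ℕ),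
    rs.Pairwise (fun y y' => y ≠ y' ∧ C y ⊆ C y') →
    ((Mset rs C).card : ℤ) = Phi (off (rs.map fun y => ((C y).card : ℤ))) := by
  intro rs
  induction rs with
  | nil =>
      intro C _
      have : Mset [] C = {∅} := by
        ext m
        simp only [mem_Mset, mem_singleton]
        constructor
        · rintro ⟨h1, -⟩
          by_contra hne
          obtain ⟨p, hp⟩ := Finset.nonempty_iff_ne_empty.mpr hne
          exact absurd (h1 p hp).1 (by simp)
        · rintro rfl; simp
      rw [this]
      simp [off, Phi_nil]
  | cons y₀ rest ih =>
      intro C H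
      rw [List.pairwise_cons] at H
      obtain ⟨hhead, Hrest⟩ := H
      have hne : ∀ y ∈ rest, y₀ ≠ y := fun y hy => (hhead y hy).1
      have hsub : ∀ y ∈ rest, C y₀ ⊆ C y := fun y hy => (hhead y hy).2
      have hnotin : ∀ (C' : ℕ → Finset ℕ) (m : Finset (ℕ × ℕ)), m ∈ Mset rest C' →
          ∀ x, (x, y₀) ∉ m := by
        intro C' m hm x hx
        have := (mem_Mset.mp hm).1 _ hx
        exact hne y₀ this.1 rfl
      -- the union description
      have hcover : Mset (y₀ :: rest) C = Mset rest C ∪ (C y₀).biUnion (fun x =>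
          (Mset rest (fun y => C y \ {x})).image (insert (x, y₀))) := by
        ext m
        simp only [Finset.mem_union, mem_biUnion, mem_image]
        constructor
        · intro hmS
          rw [mem_Mset] at hmS
          obtain ⟨hm1, hm2⟩ := hmS
          by_cases hy : ∀ p ∈ m, p.2 ≠ y₀
          · left
            rw [mem_Mset]
            refine ⟨fun p hp => ⟨?_, (hm1 p hp).2⟩, hm2⟩
            rcases List.mem_cons.mp (hm1 p hp).1 with h | h
            · exact absurd h (hy p hp)
            · exact h
          · right
            push_neg at hy
            obtain ⟨p, hp, hp2⟩ := hy
            refine ⟨p.1, by have := (hm1 p hp).2; rwa [hp2] at this, m.erase p, ?_, ?_⟩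
            · rw [mem_Mset]
              constructor
              · intro q hq
                have hqm := Finset.mem_of_mem_erase hq
                have hqp : q ≠ p := Finset.ne_of_mem_erase hq
                have hd := hm2 q hqm p hp hqp
                rcases List.mem_cons.mp (hm1 q hqm).1 with h | h
                · exact absurd h (hp2 ▸ hd.2)
                · refine ⟨h, Finset.mem_sdiff.mpr ⟨(hm1 q hqm).2, by simp [hd.1]⟩⟩
              · intro q hq r hr hqr
                exact hm2 q (Finset.mem_of_mem_erase hq) r (Finset.mem_of_mem_erase hr) hqr
            · have hpe : (p.1, y₀) = p := by rw [← hp2]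
              rw [hpe, Finset.insert_erase hp]
        · rintro (hm | ⟨x, hx, m₀, hm₀, rfl⟩)
          · rw [mem_Mset] at hm ⊢
            exact ⟨fun p hp => ⟨List.mem_cons_of_mem _ (hm.1 p hp).1, (hm.1 p hp).2⟩, hm.2⟩
          · have hnot := hnotin _ _ hm₀ x
            rw [mem_Mset] at hm₀ ⊢
            obtain ⟨hm1, hm2⟩ := hm₀
            constructor
            · intro p hp
              rcases Finset.mem_insert.mp hp with rfl | hp'
              · exact ⟨List.mem_cons_self, hx⟩
              · exact ⟨List.mem_cons_of_mem _ (hm1 p hp').1,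
                  (Finset.mem_sdiff.mp (hm1 p hp').2).1⟩
            · intro p hp q hq hpq
              rcases Finset.mem_insert.mp hp with rfl | hp' <;>
                rcases Finset.mem_insert.mp hq with rfl | hq'
              · exact absurd rfl hpq
              · have hq1 : q.1 ≠ x := by
                  have := (Finset.mem_sdiff.mp (hm1 q hq').2).2
                  simpa using this
                have hq2 : q.2 ≠ y₀ := fun hcon => hne q.2 (hm1 q hq').1 hcon.symm
                exact ⟨fun hcon => hq1 (by simpa using hcon.symm),
                  fun hcon => hq2 (by simpa using hcon.symm)⟩
              · have hp1 : p.1 ≠ x := by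
                  have := (Finset.mem_sdiff.mp (hm1 p hp').2).2
                  simpa using this
                have hp2 : p.2 ≠ y₀ := fun hcon => hne p.2 (hm1 p hp').1 hcon.symm
                exact ⟨by simpa using hp1, by simpa using hp2⟩
              · exact hm2 p hp' q hq' hpq
      -- disjointness of the two parts
      have hdisj : Disjoint (Mset rest C) ((C y₀).biUnion (fun x =>
          (Mset rest (fun y => C y \ {x})).image (insert (x, y₀)))) := by
        rw [Finset.disjoint_left]
        intro m hm hm'
        simp only [mem_biUnion, mem_image] at hm'
        obtain ⟨x, hx, m₀, hm₀, rfl⟩ := hm'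
        exact hnotin C _ hm x (Finset.mem_insert_self _ _)
      -- biUnion card
      have hpd : ∀ x ∈ C y₀, ∀ x' ∈ C y₀, x ≠ x' → Disjoint
          ((Mset rest (fun y => C y \ {x})).image (insert (x, y₀)))
          ((Mset rest (fun y => C y \ {x'})).image (insert (x', y₀))) := by
        intro x hx x' hx' hxx
        rw [Finset.disjoint_left]
        intro m hm hm'
        simp only [mem_image] at hm hm'
        obtain ⟨m₀, hm₀, rfl⟩ := hm
        obtain ⟨m₁, hm₁, he⟩ := hm'
        have : (x', y₀) ∈ insert (x, y₀) m₀ := by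
          rw [← he]; exact Finset.mem_insert_self _ _
        rcases Finset.mem_insert.mp this with h | h
        · exact hxx (by simpa using h.symm)
        · exact hnotin _ _ hm₀ x' h
      have himg : ∀ x ∈ C y₀,
          ((Mset rest (fun y => C y \ {x})).image (insert (x, y₀))).card
            = (Mset rest (fun y => C y \ {x})).card := by
        intro x hx
        apply Finset.card_image_of_injOn
        intro m₀ hm₀ m₁ hm₁ he
        have h0 := hnotin _ _ hm₀ x
        have h1 := hnotin _ _ hm₁ x
        have : (insert (x, y₀) m₀).erase (x, y₀) = (insert (x, y₀) m₁).erase (x, y₀) := by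
          rw [he]
        rwa [Finset.erase_insert h0, Finset.erase_insert h1] at this
      -- capacities shrink by one
      have hcaps : ∀ x ∈ C y₀,
          (rest.map fun y => (((fun y => C y \ {x}) y).card : ℤ))
            = (rest.map fun y => ((C y).card : ℤ)).map (· - 1) := by
        intro x hx
        rw [List.map_map]
        apply List.map_congr_left
        intro y hy
        have hxy : x ∈ C y := hsub y hy hx
        have : (C y \ {x}).card = (C y).card - 1 := by
          rw [Finset.card_sdiff_of_subset (by simpa using hxy)]
          simp
        rw [this]
        have h1 : 1 ≤ (C y).card := Finset.card_pos.mpr ⟨x, hxy⟩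
        simp only [Function.comp]
        push_cast [Nat.cast_sub h1]
        ring
      -- assemble
      rw [hcover, Finset.card_union_of_disjoint hdisj, Finset.card_biUnion hpd]
      push_cast
      rw [ih C Hrest]
      have hsum : ∑ x ∈ C y₀, (((Mset rest (fun y => C y \ {x})).image
          (insert (x, y₀))).card : ℤ)
          = ∑ x ∈ C y₀, Phi (off ((rest.map fun y => ((C y).card : ℤ)).map (· - 1))) := by
        apply Finset.sum_congr rfl
        intro x hx
        rw [himg x hx, ih _ (by
          refine Hrest.imp ?_
          rintro y y' ⟨h1, h2⟩
          exact ⟨h1, Finset.sdiff_subset_sdiff h2 (le_refl _)⟩), hcaps x hx]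
      rw [hsum, Finset.sum_const, List.map_cons, Phi_off_cons]
      push_cast
      ring
theorem length_zseg (s : ℤ) (m : ℕ) : (zseg s m).length = m := by
  induction m generalizing s with
  | zero => rfl
  | succ m ih => rw [zseg]; simp [ih]

theorem mem_allSP {n : ℕ} {lam : Finset (ℕ × ℕ)} : lam ∈ allSP n ↔ IsSP n lam := by
  simp only [allSP, Finset.mem_filter, Finset.mem_powerset]
  constructor
  · exact fun h => h.2
  · intro h
    refine ⟨?_, h⟩
    intro p hp
    have := h.1 p hp
    simp only [Finset.mem_product, Finset.mem_Icc]
    omega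

theorem card_config (n i a b l : ℕ) (h1 : 1 ≤ i) (h2 : i < a) (h3 : a < b)
    (h4 : b < l) (h5 : l ≤ n) :
    (((allSP n).filter fun lam => (i, l) ∈ lam ∧ (a, b) ∈ lam).card : ℤ)
      = Phi (List.replicate (i - 1) (0 : ℤ) ++ List.replicate (a - i) (-1 : ℤ)
          ++ List.replicate (b - 1 - a) (-2 : ℤ) ++ List.replicate (l - 1 - b) (-1 : ℤ)
          ++ List.replicate (n - l) (0 : ℤ)) := by
  classical
  set C : ℕ → Finset ℕ := fun y => Finset.Icc 1 (y - 1) \ ({i, a} : Finset ℕ) with hC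
  set rs : List ℕ := List.range' 2 (i - 1) ++ (List.range' (i + 1) (a - i)
    ++ (List.range' (a + 1) (b - 1 - a) ++ (List.range' (b + 1) (l - 1 - b)
    ++ List.range' (l + 1) (n - l)))) with hrs
  have hmem : ∀ y, y ∈ rs ↔ 2 ≤ y ∧ y ≤ n ∧ y ≠ b ∧ y ≠ l := by
    intro y
    rw [hrs]
    simp only [List.mem_append, List.mem_range'_1]
    omega
  have hCmem : ∀ x y, x ∈ C y ↔ 1 ≤ x ∧ x ≤ y - 1 ∧ x ≠ i ∧ x ≠ a := by
    intro x y
    rw [hC]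
    simp only [Finset.mem_sdiff, Finset.mem_Icc, Finset.mem_insert, Finset.mem_singleton]
    tauto
  -- pairwise
  have hlt : rs.Pairwise (· < ·) := by
    rw [hrs]
    have r1 := List.pairwise_lt_range' (s := 2) (n := i - 1)
    have r2 := List.pairwise_lt_range' (s := i + 1) (n := a - i)
    have r3 := List.pairwise_lt_range' (s := a + 1) (n := b - 1 - a)
    have r4 := List.pairwise_lt_range' (s := b + 1) (n := l - 1 - b)
    have r5 := List.pairwise_lt_range' (s := l + 1) (n := n - l)
    refine pairwise_lt_app r1 (pairwise_lt_app r2 (pairwise_lt_app r3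
      (pairwise_lt_app r4 r5 ?_) ?_) ?_) ?_ <;>
    · intro x hx y hy
      simp only [List.mem_append, List.mem_range'_1] at hx hy
      omega
  have hpw : rs.Pairwise (fun y y' => y ≠ y' ∧ C y ⊆ C y') := by
    refine hlt.imp ?_
    intro y y' hyy
    refine ⟨Nat.ne_of_lt hyy, ?_⟩
    intro x hx
    rw [hCmem] at hx ⊢
    omega
  -- bijection
  have hbij : ((allSP n).filter fun lam => (i, l) ∈ lam ∧ (a, b) ∈ lam).card
      = (Mset rs C).card := by
    apply Finset.card_bij' (fun lam _ => lam \ ({(i, l), (a, b)} : Finset (ℕ × ℕ)))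
      (fun m _ => insert (i, l) (insert (a, b) m))
    · -- forward maps into Mset
      intro lam hlam
      rw [Finset.mem_filter] at hlam
      have hall := hlam.1
      have hil := hlam.2.1
      have hab := hlam.2.2
      have hsp := mem_allSP.mp hall
      rw [mem_Mset]
      have hmemd : ∀ p, p ∈ lam \ ({(i, l), (a, b)} : Finset (ℕ × ℕ)) ↔
          p ∈ lam ∧ p ≠ (i, l) ∧ p ≠ (a, b) := by
        intro p
        simp only [Finset.mem_sdiff, Finset.mem_insert, Finset.mem_singleton]
        tauto
      constructor
      · intro p hp
        rw [hmemd] at hp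
        obtain ⟨hpl, hpil, hpab⟩ := hp
        obtain ⟨hb1, hb2, hb3⟩ := hsp.1 p hpl
        have d1 := hsp.2 p hpl (i, l) hil hpil
        have d2 := hsp.2 p hpl (a, b) hab hpab
        constructor
        · rw [hmem]
          exact ⟨by omega, hb3, d2.2, d1.2⟩
        · rw [hCmem]
          exact ⟨hb1, by omega, d1.1, d2.1⟩
      · intro p hp q hq hpq
        rw [hmemd] at hp hq
        exact hsp.2 p hp.1 q hq.1 hpq
    · -- backward maps into filter
      intro m hm
      rw [mem_Mset] at hm
      obtain ⟨hm1, hm2⟩ := hm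
      have hfacts : ∀ p ∈ m, 1 ≤ p.1 ∧ p.1 < p.2 ∧ p.2 ≤ n ∧ p.1 ≠ i ∧ p.1 ≠ a
          ∧ p.2 ≠ b ∧ p.2 ≠ l := by
        intro p hp
        have hy := (hmem p.2).mp (hm1 p hp).1
        have hx := (hCmem p.1 p.2).mp (hm1 p hp).2
        omega
      have hILm : (i, l) ∉ m := fun hcon => ((hfacts _ hcon).2.2.2.2.2.2) rfl
      have hABm : (a, b) ∉ m := fun hcon => ((hfacts _ hcon).2.2.2.2.2.1) rfl
      rw [Finset.mem_filter]
      refine ⟨mem_allSP.mpr ⟨?_, ?_⟩, by simp, by simp⟩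
      · intro p hp
        rcases Finset.mem_insert.mp hp with rfl | hp'
        · exact ⟨h1, by omega, h5⟩
        rcases Finset.mem_insert.mp hp' with rfl | hp''
        · exact ⟨by omega, by omega, by omega⟩
        · have := hfacts p hp''
          omega
      · intro p hp q hq hpq
        rcases Finset.mem_insert.mp hp with rfl | hp' <;>
          [skip; rcases Finset.mem_insert.mp hp' with rfl | hp''] <;>
          (rcases Finset.mem_insert.mp hq with rfl | hq' <;>
            [skip; rcases Finset.mem_insert.mp hq' with rfl | hq''])
        · exact absurd rfl hpq
        · exact ⟨by simp; omega, by simp; omega⟩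
        · have := hfacts q hq''
          exact ⟨fun hc => this.2.2.2.1 hc.symm, fun hc => this.2.2.2.2.2.2 hc.symm⟩
        · exact ⟨by simp; omega, by simp; omega⟩
        · exact absurd rfl hpq
        · have := hfacts q hq''
          exact ⟨fun hc => this.2.2.2.2.1 hc.symm, fun hc => this.2.2.2.2.2.1 hc.symm⟩
        · have := hfacts p hp''
          exact ⟨this.2.2.2.1, this.2.2.2.2.2.2⟩
        · have := hfacts p hp''
          exact ⟨this.2.2.2.2.1, this.2.2.2.2.2.1⟩
        · exact hm2 p hp'' q hq'' hpq
    · -- left inverse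
      intro lam hlam
      rw [Finset.mem_filter] at hlam
      obtain ⟨hil, hab⟩ := hlam.2
      ext p
      simp only [Finset.mem_insert, Finset.mem_sdiff, Finset.mem_singleton]
      constructor
      · rintro (rfl | rfl | ⟨hp, -⟩)
        · exact hil
        · exact hab
        · exact hp
      · intro hp
        by_cases e1 : p = (i, l)
        · exact Or.inl e1
        by_cases e2 : p = (a, b)
        · exact Or.inr (Or.inl e2)
        · exact Or.inr (Or.inr ⟨hp, by tauto⟩)
    · -- right inverse
      intro m hm
      rw [mem_Mset] at hm
      obtain ⟨hm1, hm2⟩ := hm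
      have hILm : (i, l) ∉ m := by
        intro hcon
        have := (hmem l).mp (hm1 _ hcon).1
        omega
      have hABm : (a, b) ∉ m := by
        intro hcon
        have := (hmem b).mp (hm1 _ hcon).1
        omega
      ext p
      simp only [Finset.mem_sdiff, Finset.mem_insert, Finset.mem_singleton]
      constructor
      · rintro ⟨(rfl | rfl | hp), hne⟩
        · exact absurd (Or.inl rfl) hne
        · exact absurd (Or.inr rfl) hne
        · exact hp
      · intro hp
        refine ⟨Or.inr (Or.inr hp), ?_⟩
        rintro (rfl | rfl)
        · exact hILm hp
        · exact hABm hp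
  -- capacities
  have hcaps : rs.map (fun y => ((C y).card : ℤ))
      = zseg 1 (i - 1) ++ (zseg ((i : ℤ) - 1) (a - i) ++ (zseg ((a : ℤ) - 2) (b - 1 - a)
        ++ (zseg ((b : ℤ) - 2) (l - 1 - b) ++ zseg ((l : ℤ) - 2) (n - l)))) := by
    have hcval : ∀ y, 2 ≤ y → ((C y).card : ℤ)
        = (y : ℤ) - 1 - (if i ≤ y - 1 then 1 else 0) - (if a ≤ y - 1 then 1 else 0) := by
      intro y hy
      rw [hC]
      rw [card_Icc_sdiff_pair i a (y - 1) h1 h2]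
      by_cases hi' : i ≤ y - 1 <;> by_cases ha' : a ≤ y - 1 <;>
        simp only [hi', ha', if_pos, if_neg, if_true, if_false] <;> push_cast <;> omega
    rw [hrs, List.map_append, List.map_append, List.map_append, List.map_append]
    congr 1
    · apply map_range'_affine
      intro t ht
      rw [hcval (2 + t) (by omega)]
      rw [if_neg (by omega), if_neg (by omega)]
      push_cast
      ring
    congr 1
    · apply map_range'_affine
      intro t ht
      rw [hcval (i + 1 + t) (by omega)]
      rw [if_pos (by omega), if_neg (by omega)]
      push_cast
      ring
    congr 1
    · apply map_range'_affine
      intro t ht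
      rw [hcval (a + 1 + t) (by omega)]
      rw [if_pos (by omega), if_pos (by omega)]
      push_cast
      ring
    congr 1
    · apply map_range'_affine
      intro t ht
      rw [hcval (b + 1 + t) (by omega)]
      rw [if_pos (by omega), if_pos (by omega)]
      push_cast
      ring
    · apply map_range'_affine
      intro t ht
      rw [hcval (l + 1 + t) (by omega)]
      rw [if_pos (by omega), if_pos (by omega)]
      push_cast
      ring
  -- assemble
  rw [hbij]
  rw [Mset_card rs C hpw, hcaps]
  rw [off_append, off_append, off_append, off_append]
  simp only [off_zseg, List.map_append, List.map_replicate, List.map_map,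
    length_zseg, List.length_append]
  rw [List.append_assoc, List.append_assoc, List.append_assoc]
  have hv2 : (i:ℤ) - 1 - 1 - ((i-1 : ℕ) : ℤ) = -1 := by omega
  have hv3 : (a:ℤ) - 2 - 1 - ((a-i:ℕ):ℤ) - ((i-1:ℕ):ℤ) = -2 := by omega
  have hv4 : (b:ℤ) - 2 - 1 - ((b-1-a:ℕ):ℤ) - ((a-i:ℕ):ℤ) - ((i-1:ℕ):ℤ) = -1 := by omega
  have hv5 : (l:ℤ) - 2 - 1 - ((l-1-b:ℕ):ℤ) - ((b-1-a:ℕ):ℤ) - ((a-i:ℕ):ℤ) - ((i-1:ℕ):ℤ) = 0 := by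
    omega
  rw [hv2, hv3, hv4, hv5]
  norm_num

theorem cnt_eq (n i a b l : ℕ) (h1 : 1 ≤ i) (h2 : i < a) (h3 : a < b)
    (h4 : b < l) (h5 : l ≤ n) :
    ((allSP n).filter fun lam => (i, l) ∈ lam ∧ (a, b) ∈ lam).card
      = ((allSP n).filter fun lam =>
          (i + n - l, n) ∈ lam ∧ (a + n - 1 - b, n - 1) ∈ lam).card := by
  have hj1 : 1 ≤ i + n - l := by omega
  have hjk : i + n - l < a + n - 1 - b := by omega
  have hk : a + n - 1 - b < n - 1 := by omega
  have hn1 : n - 1 < n := by omega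
  have e1 := card_config n i a b l h1 h2 h3 h4 h5
  have e2 := card_config n (i + n - l) (a + n - 1 - b) (n - 1) n hj1 hjk hk hn1 (le_refl n)
  have hperm : (List.replicate (i - 1) (0 : ℤ) ++ List.replicate (a - i) (-1 : ℤ)
          ++ List.replicate (b - 1 - a) (-2 : ℤ) ++ List.replicate (l - 1 - b) (-1 : ℤ)
          ++ List.replicate (n - l) (0 : ℤ)).Perm
        (List.replicate (i + n - l - 1) (0 : ℤ)
          ++ List.replicate (a + n - 1 - b - (i + n - l)) (-1 : ℤ)
          ++ List.replicate (n - 1 - 1 - (a + n - 1 - b)) (-2 : ℤ)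
          ++ List.replicate (n - 1 - (n - 1)) (-1 : ℤ)
          ++ List.replicate (n - n) (0 : ℤ)) := by
    rw [List.perm_iff_count]
    intro v
    simp only [List.count_append, List.count_replicate]
    split_ifs <;> omega
  have e3 : (((allSP n).filter fun lam => (i, l) ∈ lam ∧ (a, b) ∈ lam).card : ℤ)
      = (((allSP n).filter fun lam =>
          (i + n - l, n) ∈ lam ∧ (a + n - 1 - b, n - 1) ∈ lam).card : ℤ) := by
    rw [e1, Phi_perm hperm, ← e2]
  exact_mod_cast e3


/-- `nst(n) = Σ_{λ∈S_n} nst(λ,λ) = Σ_{j=1}^{n-3} Σ_{k=j+1}^{n-2} j(k-j)·b[n,k,j]`. -/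
theorem stmt_16 (n : ℕ) (hn : 3 ≤ n) :
    ∑ l ∈ allSP n, nstF l l =
      ∑ j ∈ Finset.Icc 1 (n - 3), ∑ k ∈ Finset.Icc (j + 1) (n - 2),
        j * (k - j) * b3 n k j := by
  classical
  set P : Finset ((ℕ × ℕ) × (ℕ × ℕ)) :=
    ((Finset.Icc 1 n ×ˢ Finset.Icc 1 n) ×ˢ (Finset.Icc 1 n ×ˢ Finset.Icc 1 n)).filter
      (fun p => p.1.1 < p.2.1 ∧ p.2.1 < p.2.2 ∧ p.2.2 < p.1.2) with hP
  have hPmem : ∀ p : (ℕ × ℕ) × (ℕ × ℕ), p ∈ P ↔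
      (1 ≤ p.1.1 ∧ p.1.1 ≤ n) ∧ (1 ≤ p.1.2 ∧ p.1.2 ≤ n) ∧ (1 ≤ p.2.1 ∧ p.2.1 ≤ n)
        ∧ (1 ≤ p.2.2 ∧ p.2.2 ≤ n)
        ∧ p.1.1 < p.2.1 ∧ p.2.1 < p.2.2 ∧ p.2.2 < p.1.2 := by
    intro p
    rw [hP]
    simp only [Finset.mem_filter, Finset.mem_product, Finset.mem_Icc]
    tauto
  -- Step A : LHS as a sum over P
  have stepA : ∑ l ∈ allSP n, nstF l l
      = ∑ p ∈ P, ((allSP n).filter fun lam => p.1 ∈ lam ∧ p.2 ∈ lam).card := by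
    have hA : ∀ lam ∈ allSP n, nstF lam lam
        = ∑ p ∈ P, (if p.1 ∈ lam ∧ p.2 ∈ lam then 1 else 0) := by
      intro lam hlam
      have hsub : lam ⊆ Finset.Icc 1 n ×ˢ Finset.Icc 1 n := by
        rw [allSP, Finset.mem_filter, Finset.mem_powerset] at hlam
        exact hlam.1
      have hset : (lam ×ˢ lam).filter
            (fun p => p.1.1 < p.2.1 ∧ p.2.1 < p.2.2 ∧ p.2.2 < p.1.2)
          = P.filter (fun p => p.1 ∈ lam ∧ p.2 ∈ lam) := by
        ext p
        simp only [Finset.mem_filter, hP]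
        constructor
        · rintro ⟨hpp, hc⟩
          have h12 := Finset.mem_product.mp hpp
          exact ⟨⟨Finset.mem_product.mpr ⟨hsub h12.1, hsub h12.2⟩, hc⟩, h12.1, h12.2⟩
        · rintro ⟨⟨-, hc⟩, hp1, hp2⟩
          exact ⟨Finset.mem_product.mpr ⟨hp1, hp2⟩, hc⟩
      rw [nstF, hset, Finset.card_filter]
    rw [Finset.sum_congr rfl hA, Finset.sum_comm]
    apply Finset.sum_congr rfl
    intro p _
    rw [Finset.card_filter]
  -- index set of (j,k)
  set JK : Finset (ℕ × ℕ) :=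
    ((Finset.Icc 1 (n - 3)) ×ˢ (Finset.Icc 1 (n - 2))).filter (fun q => q.1 < q.2) with hJK
  set f : (ℕ × ℕ) × (ℕ × ℕ) → ℕ × ℕ :=
    fun p => (p.1.1 + n - p.1.2, p.2.1 + n - 1 - p.2.2) with hf
  have hmaps : ∀ p ∈ P, f p ∈ JK := by
    intro p hp
    rw [hPmem] at hp
    rw [hJK, hf]
    simp only [Finset.mem_filter, Finset.mem_product, Finset.mem_Icc]
    omega
  -- Step B : fiberwise
  have stepB : ∑ p ∈ P, ((allSP n).filter fun lam => p.1 ∈ lam ∧ p.2 ∈ lam).card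
      = ∑ q ∈ JK, q.1 * (q.2 - q.1) * b3 n q.2 q.1 := by
    rw [← Finset.sum_fiberwise_of_maps_to hmaps
      (fun p => ((allSP n).filter fun lam => p.1 ∈ lam ∧ p.2 ∈ lam).card)]
    apply Finset.sum_congr rfl
    rintro ⟨j, k⟩ hq
    rw [hJK] at hq
    simp only [Finset.mem_filter, Finset.mem_product, Finset.mem_Icc] at hq
    obtain ⟨⟨⟨hj1, hj2⟩, hk1, hk2⟩, hjk⟩ := hq
    -- each term in the fiber equals b3 n k j
    have hconst : ∀ p ∈ P.filter (fun p => f p = (j, k)),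
        ((allSP n).filter fun lam => p.1 ∈ lam ∧ p.2 ∈ lam).card = b3 n k j := by
      rintro ⟨⟨i, l⟩, ⟨a, b⟩⟩ hp
      rw [Finset.mem_filter] at hp
      obtain ⟨hpP, hfq⟩ := hp
      rw [hPmem] at hpP
      simp only at hpP
      rw [hf] at hfq
      simp only [Prod.mk.injEq] at hfq
      obtain ⟨hq1, hq2⟩ := hfq
      have hcnt := cnt_eq n i a b l (by omega) (by omega) (by omega) (by omega) (by omega)
      simp only
      rw [hcnt, b3, if_neg (by omega : ¬ k = n - 1), hq1, hq2]
    rw [Finset.sum_congr rfl hconst, Finset.sum_const, smul_eq_mul]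
    -- fiber cardinality
    have hcard : (P.filter (fun p => f p = (j, k))).card = j * (k - j) := by
      have : (P.filter (fun p => f p = (j, k))).card
          = ((Finset.Icc 1 j) ×ˢ (Finset.Icc 1 (k - j))).card := by
        apply Finset.card_bij' (fun p _ => (p.1.1, p.2.1 - p.1.1))
          (fun q _ => ((q.1, q.1 + n - j), (q.1 + q.2, q.1 + q.2 + n - 1 - k)))
        · rintro ⟨⟨i, l⟩, ⟨a, b⟩⟩ hp
          rw [Finset.mem_filter] at hp
          obtain ⟨hpP, hfq⟩ := hp
          rw [hPmem] at hpP
          rw [hf] at hfq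
          simp only [Prod.mk.injEq] at hfq
          simp only at hpP
          simp only [Finset.mem_product, Finset.mem_Icc]
          omega
        · rintro ⟨x, t⟩ hq
          simp only [Finset.mem_product, Finset.mem_Icc] at hq
          rw [Finset.mem_filter, hPmem, hf]
          simp only [Prod.mk.injEq]
          constructor
          · omega
          · constructor <;> omega
        · rintro ⟨⟨i, l⟩, ⟨a, b⟩⟩ hp
          rw [Finset.mem_filter] at hp
          obtain ⟨hpP, hfq⟩ := hp
          rw [hPmem] at hpP
          rw [hf] at hfq
          simp only [Prod.mk.injEq] at hfq
          simp only at hpP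
          simp only [Prod.mk.injEq, true_and, and_true]
          omega
        · rintro ⟨x, t⟩ hq
          simp only [Finset.mem_product, Finset.mem_Icc] at hq
          simp only [Prod.mk.injEq, true_and, and_true]
          omega
      rw [this, Finset.card_product, Nat.card_Icc, Nat.card_Icc]
      simp
    rw [hcard]
  -- Step C : RHS reshaping
  have stepC : ∑ q ∈ JK, q.1 * (q.2 - q.1) * b3 n q.2 q.1
      = ∑ j ∈ Finset.Icc 1 (n - 3), ∑ k ∈ Finset.Icc (j + 1) (n - 2),
          j * (k - j) * b3 n k j := by
    rw [hJK, Finset.sum_filter, Finset.sum_product]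
    apply Finset.sum_congr rfl
    intro j hj
    rw [Finset.mem_Icc] at hj
    have : Finset.Icc (j + 1) (n - 2) = (Finset.Icc 1 (n - 2)).filter (fun k => j < k) := by
      ext k
      simp only [Finset.mem_Icc, Finset.mem_filter]
      omega
    rw [this, Finset.sum_filter]
  rw [stepA, stepB, stepC]
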